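/- Let X be an integrable real random variable with cumulative distribution function F_X and let θ ∈ ℝ with E[max(θ − X, 0)] > 0. Then the Omega ratio satisfies Ω_X(θ) = (∫_θ^∞ (1 − F_X(r)) dr) / (∫_{-∞}^θ F_X(r) dr) = (E[X] − θ)/E[max(θ − X, 0)] + 1. -/

import Mathlib

open MeasureTheory

private lemma ofReal_max_zero (a : ℝ) : ENNReal.ofReal (max a 0) = ENNReal.ofReal a := by
  rcases le_total a 0 with h | h
  · rw [max_eq_right h, ENNReal.ofReal_of_nonpos h, ENNReal.ofReal_zero]
  · rw [max_eq_left h]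

private lemma toReal_lintegral_ofReal {Ω : Type*} [MeasurableSpace Ω] (P : Measure Ω)
    (f : Ω → ℝ) (hf : Integrable f P) :
    (∫⁻ ω, ENNReal.ofReal (f ω) ∂P).toReal = ∫ ω, max (f ω) 0 ∂P := by
  have h : Integrable (fun ω => max (f ω) 0) P := hf.pos_part
  rw [integral_eq_lintegral_of_nonneg_ae
      (Filter.Eventually.of_forall fun ω => le_max_right (f ω) 0) h.aestronglyMeasurable]
  congr 1
  exact lintegral_congr fun ω => (ofReal_max_zero _).symm

private lemma swap_Iic {Ω : Type*} [MeasurableSpace Ω] (P : Measure Ω) [IsProbabilityMeasure P]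
    (X : Ω → ℝ) (hX : Measurable X) (θ : ℝ) :
    ∫⁻ r in Set.Iic θ, P {ω | X ω ≤ r} = ∫⁻ ω, ENNReal.ofReal (θ - X ω) ∂P := by
  have hset : MeasurableSet {p : ℝ × Ω | X p.2 ≤ p.1} :=
    measurableSet_le (hX.comp measurable_snd) measurable_fst
  have hmeas : AEMeasurable (Function.uncurry fun r ω => ({p : ℝ × Ω | X p.2 ≤ p.1}.indicator
      (fun _ => (1 : ENNReal)) (r, ω))) ((volume.restrict (Set.Iic θ)).prod P) :=
    ((measurable_const.indicator hset).comp measurable_id).aemeasurable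
  calc ∫⁻ r in Set.Iic θ, P {ω | X ω ≤ r}
      = ∫⁻ r in Set.Iic θ, (∫⁻ ω, ({p : ℝ × Ω | X p.2 ≤ p.1}.indicator
          (fun _ => (1 : ENNReal)) (r, ω)) ∂P) := by
        refine lintegral_congr fun r => ?_
        have h2 : (fun ω => ({p : ℝ × Ω | X p.2 ≤ p.1}.indicator (fun _ => (1 : ENNReal)) (r, ω)))
            = {ω | X ω ≤ r}.indicator (fun _ => (1 : ENNReal)) := by
          ext ω; by_cases h : X ω ≤ r <;> simp [Set.indicator_apply, h]
        rw [h2]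
        exact (lintegral_indicator_one
          (show MeasurableSet {ω | X ω ≤ r} from hX measurableSet_Iic)).symm
    _ = ∫⁻ ω, (∫⁻ r in Set.Iic θ, ({p : ℝ × Ω | X p.2 ≤ p.1}.indicator
          (fun _ => (1 : ENNReal)) (r, ω))) ∂P := lintegral_lintegral_swap hmeas
    _ = ∫⁻ ω, ENNReal.ofReal (θ - X ω) ∂P := by
        refine lintegral_congr fun ω => ?_
        have h2 : (fun r => ({p : ℝ × Ω | X p.2 ≤ p.1}.indicator (fun _ => (1 : ENNReal)) (r, ω)))
            = (Set.Ici (X ω)).indicator (fun _ => (1 : ENNReal)) := by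
          ext r; by_cases h : X ω ≤ r <;> simp [Set.indicator_apply, h]
        rw [h2]
        exact (lintegral_indicator_one measurableSet_Ici).trans (by
          rw [Measure.restrict_apply measurableSet_Ici, Set.Ici_inter_Iic, Real.volume_Icc])

private lemma swap_Ioi {Ω : Type*} [MeasurableSpace Ω] (P : Measure Ω) [IsProbabilityMeasure P]
    (X : Ω → ℝ) (hX : Measurable X) (θ : ℝ) :
    ∫⁻ r in Set.Ioi θ, P {ω | r < X ω} = ∫⁻ ω, ENNReal.ofReal (X ω - θ) ∂P := by
  have hset : MeasurableSet {p : ℝ × Ω | p.1 < X p.2} :=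
    measurableSet_lt measurable_fst (hX.comp measurable_snd)
  have hmeas : AEMeasurable (Function.uncurry fun r ω => ({p : ℝ × Ω | p.1 < X p.2}.indicator
      (fun _ => (1 : ENNReal)) (r, ω))) ((volume.restrict (Set.Ioi θ)).prod P) :=
    ((measurable_const.indicator hset).comp measurable_id).aemeasurable
  calc ∫⁻ r in Set.Ioi θ, P {ω | r < X ω}
      = ∫⁻ r in Set.Ioi θ, (∫⁻ ω, ({p : ℝ × Ω | p.1 < X p.2}.indicator
          (fun _ => (1 : ENNReal)) (r, ω)) ∂P) := by
        refine lintegral_congr fun r => ?_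
        have h2 : (fun ω => ({p : ℝ × Ω | p.1 < X p.2}.indicator (fun _ => (1 : ENNReal)) (r, ω)))
            = {ω | r < X ω}.indicator (fun _ => (1 : ENNReal)) := by
          ext ω; by_cases h : r < X ω <;> simp [Set.indicator_apply, h]
        rw [h2]
        exact (lintegral_indicator_one
          (show MeasurableSet {ω | r < X ω} from measurableSet_lt measurable_const hX)).symm
    _ = ∫⁻ ω, (∫⁻ r in Set.Ioi θ, ({p : ℝ × Ω | p.1 < X p.2}.indicator
          (fun _ => (1 : ENNReal)) (r, ω))) ∂P := lintegral_lintegral_swap hmeas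
    _ = ∫⁻ ω, ENNReal.ofReal (X ω - θ) ∂P := by
        refine lintegral_congr fun ω => ?_
        have h2 : (fun r => ({p : ℝ × Ω | p.1 < X p.2}.indicator (fun _ => (1 : ENNReal)) (r, ω)))
            = (Set.Iio (X ω)).indicator (fun _ => (1 : ENNReal)) := by
          ext r; by_cases h : r < X ω <;> simp [Set.indicator_apply, h]
        rw [h2]
        exact (lintegral_indicator_one measurableSet_Iio).trans (by
          rw [Measure.restrict_apply measurableSet_Iio, Set.Iio_inter_Ioi, Real.volume_Ioo])

theorem omega_ratio_alt_representation
    {Ω : Type*} [MeasurableSpace Ω] (P : Measure Ω) [IsProbabilityMeasure P]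
    (X : Ω → ℝ) (hX : Measurable X) (hXi : Integrable X P) (θ : ℝ)
    (hpos : 0 < ∫ ω, max (θ - X ω) 0 ∂P) :
    (∫ r in Set.Ioi θ, (1 - (P {ω | X ω ≤ r}).toReal))
        / (∫ r in Set.Iic θ, (P {ω | X ω ≤ r}).toReal)
      = ((∫ ω, X ω ∂P) - θ) / (∫ ω, max (θ - X ω) 0 ∂P) + 1 := by
  have hIntB : Integrable (fun ω => max (θ - X ω) 0) P := ((integrable_const θ).sub hXi).pos_part
  have hIntA : Integrable (fun ω => max (X ω - θ) 0) P := (hXi.sub (integrable_const θ)).pos_part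
  have hBeq : ∫ r in Set.Iic θ, (P {ω | X ω ≤ r}).toReal = ∫ ω, max (θ - X ω) 0 ∂P := by
    have hmono : Monotone fun r => P {ω | X ω ≤ r} := fun a b hab =>
      measure_mono (fun ω h => le_trans h hab)
    rw [integral_toReal hmono.measurable.aemeasurable
        (Filter.Eventually.of_forall fun r => measure_lt_top P _),
      swap_Iic P X hX θ, toReal_lintegral_ofReal P (fun ω => θ - X ω) ((integrable_const θ).sub hXi)]
  have hAeq : ∫ r in Set.Ioi θ, (1 - (P {ω | X ω ≤ r}).toReal) = ∫ ω, max (X ω - θ) 0 ∂P := by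
    have hcompl : ∀ r : ℝ, 1 - (P {ω | X ω ≤ r}).toReal = (P {ω | r < X ω}).toReal := by
      intro r
      have h1 : {ω | r < X ω} = {ω | X ω ≤ r}ᶜ := by ext ω; simp [not_le]
      rw [h1, measure_compl (show MeasurableSet {ω | X ω ≤ r} from hX measurableSet_Iic)
          (measure_ne_top P _), measure_univ,
        ENNReal.toReal_sub_of_le prob_le_one ENNReal.one_ne_top, ENNReal.toReal_one]
    have hanti : Antitone fun r => P {ω | r < X ω} := fun a b hab =>
      measure_mono (fun ω h => lt_of_le_of_lt hab h)
    rw [integral_congr_ae (Filter.Eventually.of_forall fun r => hcompl r),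
      integral_toReal hanti.measurable.aemeasurable
        (Filter.Eventually.of_forall fun r => measure_lt_top P _),
      swap_Ioi P X hX θ, toReal_lintegral_ofReal P (fun ω => X ω - θ) (hXi.sub (integrable_const θ))]
  rw [hAeq, hBeq]
  have hAB : (∫ ω, max (X ω - θ) 0 ∂P) - (∫ ω, max (θ - X ω) 0 ∂P) = (∫ ω, X ω ∂P) - θ := by
    rw [← integral_sub hIntA hIntB]
    have h3 : (fun ω => max (X ω - θ) 0 - max (θ - X ω) 0) = fun ω => X ω - θ := by
      ext ω
      rcases le_total (X ω) θ with h | h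
      · rw [max_eq_right (by linarith), max_eq_left (by linarith)]; ring
      · rw [max_eq_left (by linarith), max_eq_right (by linarith)]; ring
    rw [h3, integral_sub hXi (integrable_const θ), integral_const, probReal_univ]
    simp
  rw [← hAB, sub_div, div_self hpos.ne', sub_add_cancel]
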